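/- Let p ≥ 1 be an integer and let x ≥ 0 be real. Then ∑_{n=1}^{2^p−1} s_2(n)/((x+n)(x+n+1)) = ∑_{l=0}^{p−1} 2^{−l}·[β(x/2^l + 1) − β(x/2^l + 2^{p−l} + 1)], where β(y) = (1/2)·[ψ((y+1)/2) − ψ(y/2)] is Stirling's beta function. -/

import Mathlib

/-- Number of ones in the binary expansion of `n` (sum of base-2 digits). -/
def s2 (n : ℕ) : ℕ := (Nat.digits 2 n).sum

/-- The digamma function `ψ(x) = Γ'(x)/Γ(x)`. -/
noncomputable def digamma (x : ℝ) : ℝ := deriv Real.Gamma x / Real.Gamma x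

/-- Stirling's beta function `β(y) = (ψ((y+1)/2) - ψ(y/2))/2`. -/
noncomputable def stirlingBeta (y : ℝ) : ℝ :=
  (1 / 2) * (digamma ((y + 1) / 2) - digamma (y / 2))

open Real Filter Topology in
lemma digamma_add_one {x : ℝ} (hx : 0 < x) : digamma (x + 1) = digamma x + 1 / x := by
  have hder : ∀ {y : ℝ}, 0 < y → DifferentiableAt ℝ Real.Gamma y := fun hy =>
    by { apply Real.differentiableAt_Gamma; intro m;
         have : (0:ℝ) ≤ m := m.cast_nonneg; intro h; rw [h] at hy; linarith }
  have hlog : ∀ {y : ℝ}, 0 < y → digamma y = deriv (Real.log ∘ Real.Gamma) y := by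
    intro y hy
    rw [Function.comp_def, deriv.log (hder hy) (Real.Gamma_pos_of_pos hy).ne', digamma]
  rw [hlog (by positivity), hlog hx]
  have h_rec : ∀ z : ℝ, 0 < z →
      (Real.log ∘ Real.Gamma) (z + 1) = (Real.log ∘ Real.Gamma) z + Real.log z := by
    intro z hz
    simp only [Function.comp_apply, Real.Gamma_add_one hz.ne',
      Real.log_mul hz.ne' (Real.Gamma_pos_of_pos hz).ne', add_comm]
  have hd : ∀ {y : ℝ}, 0 < y → DifferentiableAt ℝ (Real.log ∘ Real.Gamma) y := fun hy =>
    (hder hy).log (Real.Gamma_pos_of_pos hy).ne'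
  rw [← deriv_comp_add_const, one_div, ← Real.deriv_log,
    ← deriv_add (hd hx) (Real.differentiableAt_log hx.ne')]
  apply EventuallyEq.deriv_eq
  filter_upwards [eventually_gt_nhds hx] using h_rec

lemma beta_step {y : ℝ} (hy : 0 < y) :
    stirlingBeta y - stirlingBeta (y + 2) = 1 / (y * (y + 1)) := by
  have h1 : (y + 2 + 1) / 2 = (y + 1) / 2 + 1 := by ring
  have h2 : (y + 2) / 2 = y / 2 + 1 := by ring
  rw [stirlingBeta, stirlingBeta, h1, h2,
    digamma_add_one (by positivity : (0:ℝ) < (y+1)/2),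
    digamma_add_one (by positivity : (0:ℝ) < y/2)]
  field_simp
  ring

lemma beta_telescope (m : ℕ) {y : ℝ} (hy : 0 < y) :
    stirlingBeta y - stirlingBeta (y + 2 * m) =
      ∑ k ∈ Finset.range m, 1 / ((y + 2 * k) * (y + 2 * k + 1)) := by
  induction m with
  | zero => simp
  | succ n ih =>
    rw [Finset.sum_range_succ, ← ih]
    have hstep := beta_step (y := y + 2 * n) (by positivity)
    push_cast
    have : y + 2 * ((n : ℝ) + 1) = y + 2 * n + 2 := by ring
    rw [this]
    linarith [hstep]

lemma inv_telescope (c : ℕ) {t : ℝ} (ht : 0 < t) :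
    ∑ j ∈ Finset.range c, 1 / ((t + j) * (t + j + 1)) = 1 / t - 1 / (t + c) := by
  induction c with
  | zero => simp
  | succ n ih =>
    rw [Finset.sum_range_succ, ih]
    have h1 : (0:ℝ) < t + n := by positivity
    have h2 : (0:ℝ) < t + n + 1 := by positivity
    push_cast
    field_simp
    ring

lemma s2_eq (p : ℕ) : ∀ n < 2 ^ p, s2 n = ∑ l ∈ Finset.range p, n / 2 ^ l % 2 := by
  induction p with
  | zero => intro n hn; interval_cases n; simp [s2]
  | succ q ih =>
    intro n hn
    rcases Nat.eq_zero_or_pos n with rfl | hpos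
    · simp [s2]
    · have hd : s2 n = n % 2 + s2 (n / 2) := by
        rw [s2, s2, Nat.digits_def' one_lt_two hpos, List.sum_cons]
      rw [hd, ih (n / 2) (by omega), Finset.sum_range_succ']
      simp only [pow_zero, Nat.div_one]
      rw [add_comm]
      congr 1
      refine Finset.sum_congr rfl fun l _ => ?_
      rw [pow_succ', Nat.div_div_eq_div_mul]

lemma sum_range_mul {M : Type*} [AddCommMonoid M] (a b : ℕ) (f : ℕ → M) :
    ∑ n ∈ Finset.range (a * b), f n =
      ∑ k ∈ Finset.range b, ∑ r ∈ Finset.range a, f (a * k + r) := by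
  induction b with
  | zero => simp
  | succ m ih =>
    rw [Nat.mul_succ, Finset.sum_range_add, ih, Finset.sum_range_succ]

theorem stmt5 (p : ℕ) (hp : 1 ≤ p) (x : ℝ) (hx : 0 ≤ x) :
    ∑ n ∈ Finset.Icc 1 (2 ^ p - 1),
      (s2 n : ℝ) / ((x + n) * (x + n + 1)) =
    ∑ l ∈ Finset.range p, ((2 : ℝ) ^ l)⁻¹ *
      (stirlingBeta (x / 2 ^ l + 1) - stirlingBeta (x / 2 ^ l + 2 ^ (p - l) + 1)) := by
  set g : ℕ → ℝ := fun n => 1 / ((x + n) * (x + n + 1)) with hg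
  -- Step 1: extend LHS to range (2^p)
  have h0 : ∑ n ∈ Finset.Icc 1 (2 ^ p - 1), (s2 n : ℝ) / ((x + n) * (x + n + 1)) =
      ∑ n ∈ Finset.range (2 ^ p), (s2 n : ℝ) * g n := by
    have hset : Finset.range (2 ^ p) = insert 0 (Finset.Icc 1 (2 ^ p - 1)) := by
      ext n
      simp only [Finset.mem_range, Finset.mem_insert, Finset.mem_Icc]
      have := Nat.one_le_two_pow (n := p)
      omega
    rw [hset, Finset.sum_insert (by simp)]
    simp only [s2, Nat.digits_zero, List.sum_nil, Nat.cast_zero, zero_mul, zero_add]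
    refine Finset.sum_congr rfl fun n _ => ?_
    rw [hg]; ring
  rw [h0]
  -- Step 2: expand s2 and swap sums
  have h1 : ∑ n ∈ Finset.range (2 ^ p), (s2 n : ℝ) * g n =
      ∑ l ∈ Finset.range p, ∑ n ∈ Finset.range (2 ^ p),
        ((n / 2 ^ l % 2 : ℕ) : ℝ) * g n := by
    rw [Finset.sum_comm]
    refine Finset.sum_congr rfl fun n hn => ?_
    rw [s2_eq p n (Finset.mem_range.mp hn)]
    push_cast
    rw [Finset.sum_mul]
  rw [h1]
  -- Step 3: per l
  refine Finset.sum_congr rfl fun l hl => ?_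
  have hlp : l < p := Finset.mem_range.mp hl
  have hpl : 0 < p - l := by omega
  -- decompose range(2^p) as 2^(l+1) * 2^(p-l-1)
  have hsplit : (2:ℕ) ^ p = 2 ^ (l + 1) * 2 ^ (p - l - 1) := by
    rw [← pow_add]; congr 1; omega
  rw [hsplit, sum_range_mul]
  -- inner sum simplification
  have hinner : ∀ k, ∑ r ∈ Finset.range (2 ^ (l + 1)),
      (((2 ^ (l + 1) * k + r) / 2 ^ l % 2 : ℕ) : ℝ) * g (2 ^ (l + 1) * k + r) =
      ∑ j ∈ Finset.range (2 ^ l), g (2 ^ (l + 1) * k + (2 ^ l + j)) := by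
    intro k
    have hcoef : ∀ r, (2 ^ (l + 1) * k + r) / 2 ^ l % 2 = r / 2 ^ l % 2 := by
      intro r
      have : (2:ℕ) ^ (l+1) * k = 2 ^ l * (2 * k) := by ring
      rw [this, Nat.mul_add_div (by positivity : 0 < 2 ^ l)]
      omega
    have h2l : (2:ℕ) ^ (l + 1) = 2 ^ l + 2 ^ l := by rw [pow_succ]; ring
    rw [h2l, Finset.sum_range_add]
    have hz : ∑ r ∈ Finset.range (2 ^ l),
        ((((2 ^ l + 2 ^ l) * k + r) / 2 ^ l % 2 : ℕ) : ℝ) * g ((2 ^ l + 2 ^ l) * k + r) = 0 := by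
      refine Finset.sum_eq_zero fun r hr => ?_
      have hr' : r < 2 ^ l := Finset.mem_range.mp hr
      have : ((2 ^ l + 2 ^ l) * k + r) / 2 ^ l % 2 = 0 := by
        have := hcoef r
        rw [← h2l] at *
        rw [this, Nat.div_eq_of_lt hr']
      rw [this]; simp
    rw [hz, zero_add]
    refine Finset.sum_congr rfl fun j hj => ?_
    have hj' : j < 2 ^ l := Finset.mem_range.mp hj
    have : ((2 ^ l + 2 ^ l) * k + (2 ^ l + j)) / 2 ^ l % 2 = 1 := by
      have := hcoef (2 ^ l + j)
      rw [← h2l] at *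
      rw [this]
      rw [Nat.add_div_left _ (by positivity : 0 < 2 ^ l), Nat.div_eq_of_lt hj']
    rw [this]; simp
  simp only [hinner]
  -- RHS: telescope beta
  have hy : (0:ℝ) < x / 2 ^ l + 1 := by positivity
  have hcast : x / 2 ^ l + 2 ^ (p - l) + 1 =
      (x / 2 ^ l + 1) + 2 * (((2 ^ (p - l - 1) : ℕ)) : ℝ) := by
    have h2 : (((2 ^ (p - l - 1) : ℕ)) : ℝ) = 2 ^ (p - l - 1) := by push_cast; ring
    have h3 : (2:ℝ) ^ (p - l) = 2 * 2 ^ (p - l - 1) := by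
      rw [← pow_succ']; congr 1; omega
    rw [h2, h3]; ring
  rw [hcast, beta_telescope _ hy, Finset.mul_sum]
  refine Finset.sum_congr rfl fun k hk => ?_
  -- per k: telescoping inverse sum
  set t : ℝ := x + (2 ^ (l + 1) * k + 2 ^ l : ℕ) with ht
  have ht0 : 0 < t := by
    rw [ht]; push_cast
    positivity
  have hsum : ∑ j ∈ Finset.range (2 ^ l), g (2 ^ (l + 1) * k + (2 ^ l + j)) =
      1 / t - 1 / (t + (2:ℝ) ^ l) := by
    have hit := inv_telescope (2 ^ l) ht0
    push_cast at hit
    rw [← hit]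
    refine Finset.sum_congr rfl fun j hj => ?_
    rw [hg, ht]
    push_cast
    ring_nf
  rw [hsum]
  -- final algebra
  have htr : t = x + 2 ^ (l+1) * (k:ℝ) + 2 ^ l := by rw [ht]; push_cast; ring
  have h2l0 : (0:ℝ) < 2 ^ l := by positivity
  have hd1 : (0:ℝ) < x / 2 ^ l + 1 + 2 * k := by positivity
  have hd2 : (0:ℝ) < x / 2 ^ l + 1 + 2 * k + 1 := by positivity
  rw [htr]
  push_cast
  have key : x + 2 ^ (l+1) * (k:ℝ) + 2 ^ l = 2 ^ l * (x / 2 ^ l + 1 + 2 * k) := by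
    field_simp; ring
  rw [key]
  field_simp
  ring
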